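/- Fix ρ > 0 and α > 0. For every integer k ≠ 0, Z_{|k|+2}(α) < Z_{|k|}(α). Consequently, if k ≠ 0, Z* > 0, and α₁, α₂ > 0 satisfy Z_{|k|}(α₁) = Z* and Z_{|k|+2}(α₂) = Z*, then α₁ < α₂; in particular, with α = τ(σ−1) for σ > 1, the critical transport-cost values satisfy τ*_{|k|} < τ*_{|k|+2} and τ*_{−|k|} < τ*_{−|k|−2}. -/

import Mathlib

open Real

/-- The quantity `Z_k(α)` appearing in the stability analysis of the racetrack economy. -/
noncomputable def Zk (ρ : ℝ) (k : ℤ) (α : ℝ) : ℝ :=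
  (α ^ 2 * ρ ^ 2 * (1 - (-1 : ℝ) ^ |k| * Real.exp (-(α * ρ * π)))) /
    (((k : ℝ) ^ 2 + α ^ 2 * ρ ^ 2) * (1 - Real.exp (-(α * ρ * π))))

/-- nonnegativity from derivative nonneg on `[0, ∞)` -/
lemma aux_nonneg {f g : ℝ → ℝ} (hd : ∀ x, HasDerivAt f (g x) x)
    (h0 : f 0 = 0) (hg : ∀ x, 0 ≤ x → 0 ≤ g x) {t : ℝ} (ht : 0 ≤ t) : 0 ≤ f t := by
  have hmono : MonotoneOn f (Set.Ici 0) :=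
    monotoneOn_of_deriv_nonneg (convex_Ici 0)
      (fun x _ => (hd x).continuousAt.continuousWithinAt)
      (fun x _ => (hd x).differentiableAt.differentiableWithinAt)
      (fun x hx => by
        rw [(hd x).deriv]
        exact hg x (le_of_lt (by simpa using hx)))
  calc (0:ℝ) = f 0 := h0.symm
    _ ≤ f t := hmono Set.self_mem_Ici ht ht

lemma exp_sub_exp_neg_ge (t : ℝ) (ht : 0 ≤ t) :
    2*t + t^3/3 ≤ Real.exp t - Real.exp (-t) := by
  have hexp : ∀ x : ℝ, HasDerivAt (fun y : ℝ => Real.exp (-y)) (-Real.exp (-x)) x := by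
    intro x
    simpa using (hasDerivAt_neg x).exp
  have hone : ∀ x : ℝ, Real.exp x * Real.exp (-x) = 1 := by
    intro x; rw [← Real.exp_add]; simp
  -- step 0 : exp x + exp (-x) - 2 ≥ 0
  have h0 : ∀ x : ℝ, 0 ≤ x → 0 ≤ Real.exp x + Real.exp (-x) - 2 := by
    intro x _
    nlinarith [hone x, sq_nonneg (Real.exp x - 1), Real.exp_pos x, Real.exp_pos (-x)]
  -- step 1 : exp x - exp (-x) - 2x ≥ 0
  have h1 : ∀ x : ℝ, 0 ≤ x → 0 ≤ Real.exp x - Real.exp (-x) - 2*x := by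
    intro x hx
    refine aux_nonneg (f := fun y => Real.exp y - Real.exp (-y) - 2*y)
      (g := fun y => Real.exp y + Real.exp (-y) - 2) (fun y => ?_) (by simp) h0 hx
    have := ((Real.hasDerivAt_exp y).sub (hexp y)).sub ((hasDerivAt_id y).const_mul 2)
    exact this.congr_deriv (by ring)
  -- step 2 : exp x + exp (-x) - 2 - x^2 ≥ 0
  have h2 : ∀ x : ℝ, 0 ≤ x → 0 ≤ Real.exp x + Real.exp (-x) - 2 - x^2 := by
    intro x hx
    refine aux_nonneg (f := fun y => Real.exp y + Real.exp (-y) - 2 - y^2)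
      (g := fun y => Real.exp y - Real.exp (-y) - 2*y) (fun y => ?_) (by norm_num) h1 hx
    have := (((Real.hasDerivAt_exp y).add (hexp y)).sub (hasDerivAt_const y 2)).sub
      (hasDerivAt_pow 2 y)
    exact this.congr_deriv (by norm_num; ring)
  -- step 3
  have h3 : 0 ≤ Real.exp t - Real.exp (-t) - 2*t - t^3/3 := by
    refine aux_nonneg (f := fun y => Real.exp y - Real.exp (-y) - 2*y - y^3/3)
      (g := fun y => Real.exp y + Real.exp (-y) - 2 - y^2) (fun y => ?_) (by simp) h2 ht
    have := ((((Real.hasDerivAt_exp y).sub (hexp y)).sub ((hasDerivAt_id y).const_mul 2)).sub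
      ((hasDerivAt_pow 3 y).div_const 3))
    exact this.congr_deriv (by norm_num)
  linarith

/-- key inequality for the odd-parity case -/
lemma key_ineq (m x r : ℝ) (hm : 1 ≤ m) (hx : 0 < x) (hr : 0 < r) :
    r*π*x*Real.exp (-(x*r*π))*(m^2 + x^2*r^2) < m^2*(1 - Real.exp (-(x*r*π))^2) := by
  set t := x*r*π with htdef
  have hπ : (3:ℝ) < π := Real.pi_gt_three
  have ht : 0 < t := by positivity
  have hE : 0 < Real.exp (-t) := Real.exp_pos _
  have hone : Real.exp t * Real.exp (-t) = 1 := by rw [← Real.exp_add]; simp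
  have hc := exp_sub_exp_neg_ge t ht.le
  have h1 : 1 - Real.exp (-t)^2 = Real.exp (-t) * (Real.exp t - Real.exp (-t)) := by
    nlinarith [hone]
  have h2 : Real.exp (-t) * (2*t + t^3/3) ≤ 1 - Real.exp (-t)^2 := by
    rw [h1]; exact mul_le_mul_of_nonneg_left hc hE.le
  -- goal: r*π*x*E*(m²+x²r²) < m²*(1-E²), note r*π*x*(m²+x²r²) = t*m² + x³r³π
  -- and m²*(2t + t³/3) = 2t m² + m² x³r³π³/3 ≥ ... strictly bigger
  have hkey : r*π*x*(m^2 + x^2*r^2) < m^2*(2*t + t^3/3) := by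
    have ht3 : t^3 = x^3*r^3*π^3 := by rw [htdef]; ring
    have hc3 : 0 < x^3*r^3*π := by positivity
    have hA : x^3*r^3*π < x^3*r^3*π^3/3 := by
      nlinarith [mul_pos hc3 (show (0:ℝ) < π^2 - 3 by nlinarith)]
    have hB : x^3*r^3*π^3/3 ≤ m^2*(x^3*r^3*π^3)/3 := by
      nlinarith [mul_nonneg (show (0:ℝ) ≤ m^2 - 1 by nlinarith)
        (le_of_lt (show (0:ℝ) < x^3*r^3*π^3 by positivity))]
    have hpos : 0 < r*π*x*m^2 := by positivity
    nlinarith [hA, hB, hpos, ht3]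
  calc r*π*x*Real.exp (-(x*r*π))*(m^2 + x^2*r^2)
      = Real.exp (-t) * (r*π*x*(m^2 + x^2*r^2)) := by rw [htdef]; ring
    _ < Real.exp (-t) * (m^2*(2*t + t^3/3)) := by
        exact (mul_lt_mul_iff_right₀ hE).2 hkey
    _ = m^2 * (Real.exp (-t) * (2*t + t^3/3)) := by ring
    _ ≤ m^2 * (1 - Real.exp (-t)^2) := by nlinarith [h2, sq_nonneg m]

/-- Strict monotonicity of the generic `Z` expression in `α` on `(0,∞)`. -/
lemma F_strictMono (ρ s m : ℝ) (hρ : 0 < ρ) (hs : s = 1 ∨ s = -1) (hm : 1 ≤ m) :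
    StrictMonoOn (fun α : ℝ =>
      (α ^ 2 * ρ ^ 2 * (1 - s * Real.exp (-(α * ρ * π)))) /
        ((m ^ 2 + α ^ 2 * ρ ^ 2) * (1 - Real.exp (-(α * ρ * π))))) (Set.Ioi 0) := by
  have hπ : (0:ℝ) < π := Real.pi_pos
  -- derivative data at each x > 0
  have hder : ∀ x : ℝ, 0 < x → ∃ d : ℝ, 0 < d ∧ HasDerivAt (fun α : ℝ =>
      (α ^ 2 * ρ ^ 2 * (1 - s * Real.exp (-(α * ρ * π)))) /
        ((m ^ 2 + α ^ 2 * ρ ^ 2) * (1 - Real.exp (-(α * ρ * π))))) d x := by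
    intro x hx
    set E : ℝ := Real.exp (-(x * ρ * π)) with hEdef
    have hE0 : 0 < E := Real.exp_pos _
    have hE1 : E < 1 := by
      rw [hEdef]
      rw [show (1:ℝ) = Real.exp 0 by simp]
      refine Real.exp_lt_exp.2 ?_
      have := mul_pos (mul_pos hx hρ) hπ
      linarith
    have hEx : HasDerivAt (fun a : ℝ => Real.exp (-(a * ρ * π))) (E * -(ρ * π)) x := by
      have h0 : HasDerivAt (fun a : ℝ => -(a * ρ * π)) (-(ρ * π)) x := by
        exact ((((hasDerivAt_id x).mul_const ρ).mul_const π).neg).congr_deriv (by ring)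
      simpa using h0.exp
    have hN1 : HasDerivAt (fun a : ℝ => a ^ 2 * ρ ^ 2) (2 * x * ρ ^ 2) x := by
      simpa using (hasDerivAt_pow 2 x).mul_const (ρ ^ 2)
    have hN2 : HasDerivAt (fun a : ℝ => 1 - s * Real.exp (-(a * ρ * π)))
        (-(s * (E * -(ρ * π)))) x := (hEx.const_mul s).const_sub 1
    have hN := hN1.mul hN2
    have hD1 : HasDerivAt (fun a : ℝ => m ^ 2 + a ^ 2 * ρ ^ 2) (2 * x * ρ ^ 2) x :=
      hN1.const_add (m ^ 2)
    have hD2 : HasDerivAt (fun a : ℝ => 1 - Real.exp (-(a * ρ * π))) (-(E * -(ρ * π))) x :=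
      hEx.const_sub 1
    have hD := hD1.mul hD2
    have hDpos : 0 < (m ^ 2 + x ^ 2 * ρ ^ 2) * (1 - E) := by
      have : 0 < m ^ 2 + x ^ 2 * ρ ^ 2 := by nlinarith
      nlinarith
    have hF := hN.div hD (by
      show (m ^ 2 + x ^ 2 * ρ ^ 2) * (1 - E) ≠ 0
      exact ne_of_gt hDpos)
    refine ⟨_, ?_, hF⟩
    -- positivity of the derivative value
    apply div_pos
    · -- numerator
      rcases hs with rfl | rfl
      · have hident : (2 * x * ρ ^ 2 * (1 - 1 * E) + x ^ 2 * ρ ^ 2 * -(1 * (E * -(ρ * π)))) *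
            ((m ^ 2 + x ^ 2 * ρ ^ 2) * (1 - E)) -
            x ^ 2 * ρ ^ 2 * (1 - 1 * E) *
            (2 * x * ρ ^ 2 * (1 - E) + (m ^ 2 + x ^ 2 * ρ ^ 2) * -(E * -(ρ * π))) =
            2 * x * ρ ^ 2 * m ^ 2 * (1 - E) ^ 2 := by ring
        simp only [Pi.mul_apply]
        rw [← hEdef]
        rw [hident]
        have h1E : 0 < 1 - E := by linarith
        positivity
      · have hident : (2 * x * ρ ^ 2 * (1 - (-1) * E) + x ^ 2 * ρ ^ 2 * -((-1) * (E * -(ρ * π)))) *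
            ((m ^ 2 + x ^ 2 * ρ ^ 2) * (1 - E)) -
            x ^ 2 * ρ ^ 2 * (1 - (-1) * E) *
            (2 * x * ρ ^ 2 * (1 - E) + (m ^ 2 + x ^ 2 * ρ ^ 2) * -(E * -(ρ * π))) =
            2 * x * ρ ^ 2 * (m ^ 2 * (1 - E ^ 2) - ρ * π * x * E * (m ^ 2 + x ^ 2 * ρ ^ 2)) := by
          ring
        simp only [Pi.mul_apply]
        rw [← hEdef]
        rw [hident]
        have hkey := key_ineq m x ρ hm hx hρ
        rw [← hEdef] at hkey
        have : 0 < m ^ 2 * (1 - E ^ 2) - ρ * π * x * E * (m ^ 2 + x ^ 2 * ρ ^ 2) := by linarith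
        have h2 : 0 < 2 * x * ρ ^ 2 := by positivity
        exact mul_pos h2 this
    · positivity
  -- conclude
  apply strictMonoOn_of_hasDerivWithinAt_pos (convex_Ioi 0)
    (f' := fun x => if h : 0 < x then (hder x h).choose else 1)
  · intro x hx
    exact ((hder x hx).choose_spec.2).continuousAt.continuousWithinAt
  · intro x hx
    rw [interior_Ioi] at hx
    have hx' : 0 < x := hx
    rw [dif_pos hx']
    exact ((hder x hx').choose_spec.2).hasDerivWithinAt
  · intro x hx
    rw [interior_Ioi] at hx
    have hx' : 0 < x := hx
    rw [dif_pos hx']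
    exact (hder x hx').choose_spec.1

lemma neg_one_zpow_mem (m : ℤ) : ((-1 : ℝ) ^ m = 1 ∨ (-1 : ℝ) ^ m = -1) := by
  rcases Int.even_or_odd m with he | ho
  · left; rw [he.neg_zpow, one_zpow]
  · right; exact ho.neg_one_zpow

lemma zk_mono (ρ : ℝ) (hρ : 0 < ρ) (m : ℤ) (hm : 1 ≤ m) :
    StrictMonoOn (Zk ρ m) (Set.Ioi 0) := by
  have habs : |m| = m := abs_of_nonneg (by omega)
  have heq : Zk ρ m = fun α : ℝ =>
      (α ^ 2 * ρ ^ 2 * (1 - ((-1 : ℝ) ^ m) * Real.exp (-(α * ρ * π)))) /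
        (((m : ℝ) ^ 2 + α ^ 2 * ρ ^ 2) * (1 - Real.exp (-(α * ρ * π)))) := by
    funext α; rw [Zk, habs]
  rw [heq]
  exact F_strictMono ρ ((-1:ℝ) ^ m) (m : ℝ) hρ (neg_one_zpow_mem m) (by exact_mod_cast hm)

lemma zk_dec (ρ : ℝ) (hρ : 0 < ρ) (m : ℤ) (hm : 1 ≤ m) (α : ℝ) (hα : 0 < α) :
    Zk ρ (m + 2) α < Zk ρ m α := by
  have hπ : (0:ℝ) < π := Real.pi_pos
  have habs : |m| = m := abs_of_nonneg (by omega)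
  have habs2 : |m + 2| = m + 2 := abs_of_nonneg (by omega)
  have hs : (-1 : ℝ) ^ (m + 2) = (-1 : ℝ) ^ m := by
    rw [zpow_add₀ (by norm_num : (-1:ℝ) ≠ 0)]
    norm_num
  set E : ℝ := Real.exp (-(α * ρ * π)) with hEdef
  have hE0 : 0 < E := Real.exp_pos _
  have hE1 : E < 1 := by
    rw [hEdef, show (1:ℝ) = Real.exp 0 by simp]
    refine Real.exp_lt_exp.2 ?_
    have := mul_pos (mul_pos hα hρ) hπ
    linarith
  have hnum : 0 < α ^ 2 * ρ ^ 2 * (1 - (-1 : ℝ) ^ m * E) := by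
    rcases neg_one_zpow_mem m with h | h <;> rw [h] <;> nlinarith [sq_nonneg α, sq_nonneg ρ,
      mul_pos (mul_pos (mul_pos hα hα) hρ) hρ]
  have hmR : (1:ℝ) ≤ (m : ℝ) := by exact_mod_cast hm
  have h1 : (0:ℝ) < (m : ℝ) ^ 2 + α ^ 2 * ρ ^ 2 := by
    nlinarith [hmR, mul_pos (mul_pos (mul_pos hα hα) hρ) hρ]
  have hb : 0 < ((m : ℝ) ^ 2 + α ^ 2 * ρ ^ 2) * (1 - E) :=
    mul_pos h1 (by linarith)
  have hbc : ((m : ℝ) ^ 2 + α ^ 2 * ρ ^ 2) * (1 - E) <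
      (((m + 2 : ℤ) : ℝ) ^ 2 + α ^ 2 * ρ ^ 2) * (1 - E) := by
    push_cast
    nlinarith
  rw [Zk, Zk, habs, habs2, hs]
  exact div_lt_div_of_pos_left hnum hb hbc

lemma zk_neg (ρ : ℝ) (m : ℤ) (α : ℝ) : Zk ρ (-m) α = Zk ρ m α := by
  rw [Zk, Zk, abs_neg]
  push_cast
  ring_nf

theorem critical_points_increase_with_frequency (ρ : ℝ) (hρ : 0 < ρ) (k : ℤ) (hk : k ≠ 0) :
    (∀ α : ℝ, 0 < α → Zk ρ (|k| + 2) α < Zk ρ |k| α) ∧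
    (∀ Zstar : ℝ, 0 < Zstar → ∀ α₁ α₂ : ℝ, 0 < α₁ → 0 < α₂ →
      Zk ρ |k| α₁ = Zstar → Zk ρ (|k| + 2) α₂ = Zstar → α₁ < α₂) ∧
    (∀ σ : ℝ, 1 < σ → ∀ Zstar : ℝ, 0 < Zstar → ∀ τ₁ τ₂ : ℝ, 0 < τ₁ → 0 < τ₂ →
      ((Zk ρ |k| (τ₁ * (σ - 1)) = Zstar → Zk ρ (|k| + 2) (τ₂ * (σ - 1)) = Zstar → τ₁ < τ₂) ∧
       (Zk ρ (-|k|) (τ₁ * (σ - 1)) = Zstar → Zk ρ (-|k| - 2) (τ₂ * (σ - 1)) = Zstar → τ₁ < τ₂))) := by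
  have hk1 : (1:ℤ) ≤ |k| := Int.one_le_abs hk
  have P1 : ∀ α : ℝ, 0 < α → Zk ρ (|k| + 2) α < Zk ρ |k| α :=
    fun α hα => zk_dec ρ hρ |k| hk1 α hα
  have P2 : ∀ α₁ α₂ : ℝ, 0 < α₁ → 0 < α₂ → Zk ρ |k| α₁ = Zk ρ (|k| + 2) α₂ → α₁ < α₂ := by
    intro α₁ α₂ h1 h2 he
    by_contra hcon
    push_neg at hcon
    have hle : Zk ρ |k| α₂ ≤ Zk ρ |k| α₁ := by
      rcases eq_or_lt_of_le hcon with heq | hlt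
      · rw [heq]
      · exact le_of_lt ((zk_mono ρ hρ |k| hk1) (Set.mem_Ioi.mpr h2) (Set.mem_Ioi.mpr h1) hlt)
    have hlt2 := P1 α₂ h2
    linarith [he.ge, he.le]
  refine ⟨P1, fun Z hZ α₁ α₂ h1 h2 e1 e2 => P2 α₁ α₂ h1 h2 (by rw [e1, e2]), ?_⟩
  intro σ hσ Z hZ τ₁ τ₂ h1 h2
  have hσ' : 0 < σ - 1 := by linarith
  have g1 : 0 < τ₁ * (σ - 1) := mul_pos h1 hσ'
  have g2 : 0 < τ₂ * (σ - 1) := mul_pos h2 hσ'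
  constructor
  · intro e1 e2
    have := P2 _ _ g1 g2 (by rw [e1, e2])
    exact lt_of_mul_lt_mul_right this hσ'.le
  · intro e1 e2
    rw [zk_neg] at e1
    have hrw : (-|k| - 2 : ℤ) = -(|k| + 2) := by ring
    rw [hrw, zk_neg] at e2
    have := P2 _ _ g1 g2 (by rw [e1, e2])
    exact lt_of_mul_lt_mul_right this hσ'.le
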